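/- arXiv:1411.7120 — 7 statements merged into one kernel-verified Lean document; each statement's English description precedes it below -/
import Mathlib

section
/- Let {A_k} be a nonnegative sequence of real numbers satisfying A_k - A_{k+1} ≥ α A_{k+1}^2 for all k ≥ 0, where α > 0. Then for any k ≥ 2, A_k ≤ max{ (1/2)^((k-1)/2) A_0, 4/(α(k-1)) }. -/
/-- Lemma 4: a nonnegative real sequence with `A k - A (k+1) ≥ α A(k+1)²` satisfies
`A k ≤ max ((1/2)^((k-1)/2) A 0) (4/(α (k-1)))` for `k ≥ 2`. -/
theorem stmt_0 (A : ℕ → ℝ) (α : ℝ) (hα : 0 < α) (hA : ∀ k, 0 ≤ A k)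
    (hrec : ∀ k : ℕ, α * (A (k + 1)) ^ 2 ≤ A k - A (k + 1)) :
    ∀ k : ℕ, 2 ≤ k →
      A k ≤ max (((1 : ℝ) / 2) ^ (((k : ℝ) - 1) / 2) * A 0) (4 / (α * ((k : ℝ) - 1))) := by
  have hmono : ∀ k : ℕ, A (k + 1) ≤ A k := by
    intro k
    nlinarith [hrec k, sq_nonneg (A (k + 1)), hα.le]
  -- main invariant
  have main : ∀ k : ℕ, ∃ h : ℕ, h ≤ k ∧ A k ≤ ((1 : ℝ) / 2) ^ h * A 0 ∧
      (0 < A k → α * ((k : ℝ) - h) / 2 ≤ 1 / A k) := by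
    intro k
    induction k with
    | zero =>
      exact ⟨0, le_rfl, by simp, fun hpos => by simp; positivity⟩
    | succ k ih =>
      obtain ⟨h, hhk, hgeo, hinv⟩ := ih
      by_cases hc : A (k + 1) ≤ A k / 2
      · refine ⟨h + 1, by omega, ?_, ?_⟩
        · have : ((1 : ℝ) / 2) ^ (h + 1) * A 0 = (1 / 2) * (((1 : ℝ) / 2) ^ h * A 0) := by
            ring
          rw [this]
          nlinarith [hA (k + 1)]
        · intro hpos
          have hAk : 0 < A k := lt_of_lt_of_le hpos (hmono k)
          have h1 : 1 / A k ≤ 1 / A (k + 1) := by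
            apply one_div_le_one_div_of_le hpos (hmono k)
          have h2 := hinv hAk
          push_cast
          nlinarith [hα.le]
      · push_neg at hc
        refine ⟨h, by omega, le_trans (hmono k) hgeo, ?_⟩
        intro hpos
        have hAk : 0 < A k := lt_of_lt_of_le hpos (hmono k)
        have key : 1 / A k + α / 2 ≤ 1 / A (k + 1) := by
          rw [div_add_div _ _ hAk.ne' two_ne_zero, div_le_div_iff₀ (by positivity) hpos]
          nlinarith [hrec k, mul_nonneg hα.le hpos.le,
            mul_le_mul_of_nonneg_left hc.le (mul_nonneg hα.le hpos.le)]
        have h2 := hinv hAk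
        push_cast
        nlinarith
  intro k hk
  obtain ⟨h, hhk, hgeo, hinv⟩ := main k
  have hk1 : (1 : ℝ) ≤ (k : ℝ) - 1 := by
    have : (2 : ℝ) ≤ (k : ℝ) := by exact_mod_cast hk
    linarith
  by_cases hc : ((k : ℝ) - 1) / 2 ≤ (h : ℝ)
  · refine le_trans ?_ (le_max_left _ _)
    refine le_trans hgeo ?_
    apply mul_le_mul_of_nonneg_right _ (hA 0)
    have e1 : ((1 : ℝ) / 2) ^ h = ((1 : ℝ) / 2) ^ ((h : ℝ)) := by
      rw [Real.rpow_natCast]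
    rw [e1]
    exact Real.rpow_le_rpow_of_exponent_ge (by norm_num) (by norm_num) hc
  · push_neg at hc
    refine le_trans ?_ (le_max_right _ _)
    rcases eq_or_lt_of_le (hA k) with hz | hpos
    · rw [← hz]
      positivity
    · have h2 := hinv hpos
      have h3 : α * ((k : ℝ) - 1) / 4 ≤ 1 / A k := by
        refine le_trans ?_ h2
        have hkh : (k : ℝ) - 1 ≤ 2 * ((k : ℝ) - h) := by
          have : (h : ℝ) ≤ (k : ℝ) := by exact_mod_cast hhk
          linarith
        nlinarith
      rw [le_div_iff₀ hpos] at h3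
      rw [le_div_iff₀ (by positivity)]
      nlinarith
end

section
/- Let h : ℝⁿ → ℝ be continuously differentiable with L_h-Lipschitz gradient, σ : ℝⁿ → (-∞,+∞] proper lower semicontinuous with inf σ > -∞, and fix t > L_h. For any u ∈ dom σ and u⁺ ∈ prox_t^σ(u - (1/t)∇h(u)), one has h(u⁺) + σ(u⁺) ≤ h(u) + σ(u) - ((t - L_h)/2)‖u⁺ - u‖². -/
open RealInnerProductSpace

lemma descent_aux {n : ℕ} (h : EuclideanSpace ℝ (Fin n) → ℝ)
    (h' : EuclideanSpace ℝ (Fin n) → EuclideanSpace ℝ (Fin n)) (Lh : ℝ)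
    (hdiff : ∀ x, HasGradientAt h (h' x) x)
    (hlip : ∀ u v, ‖h' u - h' v‖ ≤ Lh * ‖u - v‖)
    (u w : EuclideanSpace ℝ (Fin n)) :
    h (u + w) ≤ h u + ⟪h' u, w⟫ + Lh / 2 * ‖w‖ ^ 2 := by
  set F : ℝ → ℝ := fun s => h u + s * ⟪h' u, w⟫ + Lh / 2 * s ^ 2 * ‖w‖ ^ 2 - h (u + s • w)
    with hF
  have hc : ∀ s : ℝ, HasDerivAt (fun s : ℝ => u + s • w) w s := by
    intro s
    simpa using ((hasDerivAt_id s).smul_const w).const_add u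
  have hH : ∀ s : ℝ, HasDerivAt (fun s : ℝ => h (u + s • w)) ⟪h' (u + s • w), w⟫ s := by
    intro s
    have := ((hdiff (u + s • w)).hasFDerivAt.comp_hasDerivAt s (hc s))
    simp at this; exact this
  have hF' : ∀ s : ℝ,
      HasDerivAt F (⟪h' u, w⟫ + Lh * s * ‖w‖ ^ 2 - ⟪h' (u + s • w), w⟫) s := by
    intro s
    have ha : HasDerivAt (fun s : ℝ => h u + s * ⟪h' u, w⟫) ⟪h' u, w⟫ s := by
      simpa using ((hasDerivAt_id s).mul_const (⟪h' u, w⟫ : ℝ)).const_add (h u)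
    have hb : HasDerivAt (fun s : ℝ => Lh / 2 * s ^ 2 * ‖w‖ ^ 2)
        (Lh * s * ‖w‖ ^ 2) s := by
      have := (((hasDerivAt_pow 2 s)).const_mul (Lh / 2)).mul_const (‖w‖ ^ 2)
      rw [show Lh * s * ‖w‖ ^ 2 = Lh / 2 * ((2 : ℕ) * s ^ (2 - 1)) * ‖w‖ ^ 2 by push_cast; ring]
      exact this
    exact (ha.add hb).sub (hH s)
  have key : F 0 ≤ F 1 := by
    have hmono : MonotoneOn F (Set.Icc (0:ℝ) 1) := by
      apply monotoneOn_of_deriv_nonneg (convex_Icc 0 1)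
      · exact fun s _ => (hF' s).differentiableAt.continuousAt.continuousWithinAt
      · exact fun s _ => (hF' s).differentiableAt.differentiableWithinAt
      · intro s hs
        rw [interior_Icc] at hs
        rw [(hF' s).deriv]
        have hb : ⟪h' (u + s • w) - h' u, w⟫ ≤ Lh * s * ‖w‖ ^ 2 := by
          calc ⟪h' (u + s • w) - h' u, w⟫ ≤ ‖h' (u + s • w) - h' u‖ * ‖w‖ :=
                real_inner_le_norm _ _
            _ ≤ Lh * ‖(u + s • w) - u‖ * ‖w‖ :=
                mul_le_mul_of_nonneg_right (hlip (u + s • w) u) (norm_nonneg _)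
            _ = Lh * s * ‖w‖ ^ 2 := by
                rw [add_sub_cancel_left, norm_smul, Real.norm_eq_abs, abs_of_pos hs.1]
                ring
        have h2 : ⟪h' (u + s • w), w⟫ - ⟪h' u, w⟫ ≤ Lh * s * ‖w‖ ^ 2 := by
          rw [← inner_sub_left]; exact hb
        linarith
    exact hmono (by norm_num) (by norm_num) (by norm_num)
  have e0 : F 0 = 0 := by simp only [hF]; norm_num
  have e1 : F 1 = h u + ⟪h' u, w⟫ + Lh / 2 * ‖w‖ ^ 2 - h (u + w) := by
    simp only [hF, one_smul]; norm_num
  rw [e0, e1] at key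
  linarith

/-- Lemma 3 (sufficient decrease of the proximal gradient step): if `∇h` is `L_h`-Lipschitz,
`σ` is lsc and bounded below, `t > L_h`, and `u⁺` minimizes
`v ↦ σ v + (t/2)‖v - (u - (1/t)∇h(u))‖²`, then
`h u⁺ + σ u⁺ ≤ h u + σ u - ((t - L_h)/2)‖u⁺ - u‖²`. -/
theorem stmt_4 {n : ℕ} (h : EuclideanSpace ℝ (Fin n) → ℝ)
    (h' : EuclideanSpace ℝ (Fin n) → EuclideanSpace ℝ (Fin n)) (Lh : ℝ)
    (hdiff : ∀ x, HasGradientAt h (h' x) x)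
    (hlip : ∀ u v, ‖h' u - h' v‖ ≤ Lh * ‖u - v‖)
    (σ : EuclideanSpace ℝ (Fin n) → ℝ)
    (hlsc : LowerSemicontinuous σ) (hbdd : BddBelow (Set.range σ))
    (t : ℝ) (ht : Lh < t)
    (u uplus : EuclideanSpace ℝ (Fin n))
    (hprox : ∀ v, σ uplus + t / 2 * ‖uplus - (u - (1 / t) • h' u)‖ ^ 2 ≤
      σ v + t / 2 * ‖v - (u - (1 / t) • h' u)‖ ^ 2) :
    h uplus + σ uplus ≤ h u + σ u - (t - Lh) / 2 * ‖uplus - u‖ ^ 2 := by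
  by_cases hw : uplus = u
  · subst hw; simp
  · set w := uplus - u with hwdef
    have hwne : w ≠ 0 := sub_ne_zero.mpr hw
    have hwpos : 0 < ‖w‖ := norm_pos_iff.mpr hwne
    have hLh : 0 ≤ Lh := by
      have h1 := hlip uplus u
      have h2 := norm_nonneg (h' uplus - h' u)
      nlinarith
    have ht0 : (0:ℝ) < t := lt_of_le_of_lt hLh ht
    -- descent lemma
    have hdesc : h uplus ≤ h u + ⟪h' u, w⟫ + Lh / 2 * ‖w‖ ^ 2 := by
      have := descent_aux h h' Lh hdiff hlip u w
      simpa [hwdef] using this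
    -- prox inequality at v = u
    have hp := hprox u
    have e1 : uplus - (u - (1 / t) • h' u) = w + (1 / t) • h' u := by
      rw [hwdef]; abel
    have e2 : u - (u - (1 / t) • h' u) = (1 / t) • h' u := by abel
    rw [e1, e2] at hp
    have e3 : ‖w + (1 / t) • h' u‖ ^ 2
        = ‖w‖ ^ 2 + 2 * ((1 / t) * ⟪w, h' u⟫) + ‖(1 / t) • h' u‖ ^ 2 := by
      rw [norm_add_sq_real, real_inner_smul_right]
    rw [e3] at hp
    have hcomm : ⟪h' u, w⟫ = ⟪w, h' u⟫ := real_inner_comm _ _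
    have hcancel : t / 2 * (2 * ((1 / t) * ⟪w, h' u⟫)) = ⟪w, h' u⟫ := by
      field_simp
    nlinarith [hp, hdesc, hcancel]
end

section
/- Suppose a sequence {z^k} and a function Ψ with optimal value Ψ* satisfy: (a) Ψ(z^k) - Ψ(z^{k+1}) ≥ τ₁·d(z^k, z^{k+1})² for all k, and (b) Ψ(z^{k+1}) - Ψ* ≤ τ₂·d(z^k, z^{k+1}) for all k, where τ₁, τ₂ > 0, d is a nonnegative function, and Ψ(z^k) ≥ Ψ* for all k. Then with α = τ₁/τ₂², the sequence A_k = Ψ(z^k) - Ψ* satisfies A_k - A_{k+1} ≥ α A_{k+1}² for all k, and consequently Ψ(z^k) - Ψ* ≤ max{ (1/2)^((k-1)/2)(Ψ(z^0) - Ψ*), 4τ₂²/(τ₁(k-1)) } for all k ≥ 2. -/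
lemma aux_rate (A : ℕ → ℝ) (τ₁ τ₂ : ℝ) (hτ₁ : 0 < τ₁) (hτ₂ : 0 < τ₂)
    (hA0 : ∀ k, 0 ≤ A k) (hmono : ∀ k, A (k + 1) ≤ A k)
    (hrec : ∀ k, τ₁ * A (k + 1) ^ 2 ≤ (A k - A (k + 1)) * τ₂ ^ 2) :
    ∀ k : ℕ, 2 ≤ k → A k ≤
      max (((1 : ℝ) / 2) ^ (((k : ℝ) - 1) / 2) * A 0)
        (4 * τ₂ ^ 2 / (τ₁ * ((k : ℝ) - 1))) := by
  have key : ∀ k : ℕ, ∃ m : ℕ, m ≤ k ∧ A k ≤ (1 / 2 : ℝ) ^ m * A 0 ∧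
      A k * (τ₁ * ((k : ℝ) - m)) ≤ 2 * τ₂ ^ 2 := by
    intro k
    induction k with
    | zero =>
      refine ⟨0, le_refl _, by simp, ?_⟩
      simp only [Nat.cast_zero, sub_self, mul_zero]
      positivity
    | succ k ih =>
      obtain ⟨m, hm, hgeo, hhar⟩ := ih
      have hkm : (0 : ℝ) ≤ (k : ℝ) - m := by
        have : (m : ℝ) ≤ k := by exact_mod_cast hm
        linarith
      by_cases hcase : A (k + 1) ≤ A k / 2
      · refine ⟨m + 1, by omega, ?_, ?_⟩
        · have h : (1 / 2 : ℝ) ^ (m + 1) * A 0 = ((1 / 2 : ℝ) ^ m * A 0) / 2 := by ring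
          rw [h]
          linarith
        · push_cast
          have hprod : 0 ≤ (A k - A (k + 1)) * (τ₁ * ((k : ℝ) - m)) :=
            mul_nonneg (by linarith [hmono k]) (by positivity)
          nlinarith [hprod]
      · push_neg at hcase
        have hA'pos : 0 < A (k + 1) := by
          have := hA0 k
          linarith
        have hAkpos : 0 < A k := lt_of_lt_of_le hA'pos (hmono k)
        refine ⟨m, by omega, le_trans (hmono k) hgeo, ?_⟩
        push_cast
        have h2 := hrec k
        -- multiply target by A k > 0; certificate:
        -- A k * (2τ₂² - A'τ₁(t+1)) ≥ τ₁ A' (2A' - A k) > 0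
        nlinarith [mul_le_mul_of_nonneg_right hhar hA'pos.le,
          mul_nonneg (mul_nonneg hτ₁.le hA'pos.le)
            (by linarith : (0 : ℝ) ≤ 2 * A (k + 1) - A k),
          hAkpos, mul_pos hAkpos hA'pos]
  intro k hk
  obtain ⟨m, hm, hgeo, hhar⟩ := key k
  have hk2 : (2 : ℝ) ≤ (k : ℝ) := by exact_mod_cast hk
  by_cases hcmp : ((k : ℝ) - 1) / 2 ≤ m
  · refine le_trans ?_ (le_max_left _ _)
    have hpow : (1 / 2 : ℝ) ^ m * A 0 ≤ ((1 : ℝ) / 2) ^ (((k : ℝ) - 1) / 2) * A 0 := by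
      apply mul_le_mul_of_nonneg_right _ (hA0 0)
      calc (1 / 2 : ℝ) ^ m = ((1 : ℝ) / 2) ^ ((m : ℕ) : ℝ) := by
            rw [Real.rpow_natCast]
        _ ≤ ((1 : ℝ) / 2) ^ (((k : ℝ) - 1) / 2) :=
            Real.rpow_le_rpow_of_exponent_ge (by norm_num) (by norm_num) hcmp
    exact le_trans hgeo hpow
  · refine le_trans ?_ (le_max_right _ _)
    push_neg at hcmp
    have hk1 : (0 : ℝ) < τ₁ * ((k : ℝ) - 1) := mul_pos hτ₁ (by linarith)
    rw [le_div_iff₀ hk1]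
    have hlin : (k : ℝ) - 1 ≤ 2 * ((k : ℝ) - m) := by linarith
    nlinarith [mul_nonneg (hA0 k) hτ₁.le, hhar]

/-- The theoretical framework: properties (a) and (b) give the recursion
`A_k - A_{k+1} ≥ α A_{k+1}²` with `α = τ₁/τ₂²` for `A_k = Ψ(z^k) - Ψ*`,
and consequently the sublinear rate of convergence. -/
theorem stmt_5 {N : Type*} (z : ℕ → N) (Ψ : N → ℝ) (Ψstar : ℝ)
    (d : N → N → ℝ) (τ₁ τ₂ : ℝ) (hτ₁ : 0 < τ₁) (hτ₂ : 0 < τ₂)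
    (hd : ∀ a b, 0 ≤ d a b)
    (hlb : ∀ k, Ψstar ≤ Ψ (z k))
    (ha : ∀ k : ℕ, τ₁ * (d (z k) (z (k + 1))) ^ 2 ≤ Ψ (z k) - Ψ (z (k + 1)))
    (hb : ∀ k : ℕ, Ψ (z (k + 1)) - Ψstar ≤ τ₂ * d (z k) (z (k + 1))) :
    (∀ k : ℕ, τ₁ / τ₂ ^ 2 * (Ψ (z (k + 1)) - Ψstar) ^ 2 ≤
        (Ψ (z k) - Ψstar) - (Ψ (z (k + 1)) - Ψstar)) ∧
      ∀ k : ℕ, 2 ≤ k → Ψ (z k) - Ψstar ≤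
        max (((1 : ℝ) / 2) ^ (((k : ℝ) - 1) / 2) * (Ψ (z 0) - Ψstar))
          (4 * τ₂ ^ 2 / (τ₁ * ((k : ℝ) - 1))) := by
  have part1 : ∀ k : ℕ, τ₁ / τ₂ ^ 2 * (Ψ (z (k + 1)) - Ψstar) ^ 2 ≤
      (Ψ (z k) - Ψstar) - (Ψ (z (k + 1)) - Ψstar) := by
    intro k
    rw [div_mul_eq_mul_div, div_le_iff₀ (by positivity)]
    have h1 := ha k
    have h2 := hb k
    have h3 := hlb (k + 1)
    have hsq : (Ψ (z (k + 1)) - Ψstar) ^ 2 ≤ (τ₂ * d (z k) (z (k + 1))) ^ 2 :=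
      pow_le_pow_left₀ (by linarith) h2 2
    nlinarith [mul_le_mul_of_nonneg_left hsq hτ₁.le,
      mul_le_mul_of_nonneg_right h1 (sq_nonneg τ₂)]
  refine ⟨part1, ?_⟩
  apply aux_rate (fun k => Ψ (z k) - Ψstar) τ₁ τ₂ hτ₁ hτ₂
  · intro k
    exact sub_nonneg.2 (hlb k)
  · intro k
    have h1 := ha k
    have h2 : 0 ≤ τ₁ * (d (z k) (z (k + 1))) ^ 2 := by positivity
    show Ψ (z (k+1)) - Ψstar ≤ Ψ (z k) - Ψstar
    linarith
  · intro k
    have := part1 k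
    rw [div_mul_eq_mul_div, div_le_iff₀ (by positivity)] at this
    simpa using this
end

section
/- Under AM-variant-I, if y^{k+1} minimizes y ↦ H(x^{k+1}, y) + g(y), then combining with the x-update step (c_k = γ L₁(y^k), γ > 1) gives Ψ(z^k) - Ψ(z^{k+1}) ≥ ((γ-1)λ₁⁻/2)‖x^{k+1} - x^k‖², where Ψ(x,y) = f(x) + H(x,y) + g(y) and λ₁⁻ ≤ L₁(y^k) for all k. -/
open RealInnerProductSpace

lemma descent_lemma {n : ℕ} (φ : EuclideanSpace ℝ (Fin n) → ℝ)
    (φ' : EuclideanSpace ℝ (Fin n) → EuclideanSpace ℝ (Fin n))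
    (hdiff : ∀ x, HasGradientAt φ (φ' x) x)
    (L : ℝ)
    (hlip : ∀ x₁ x₂, ‖φ' x₁ - φ' x₂‖ ≤ L * ‖x₁ - x₂‖)
    (x y : EuclideanSpace ℝ (Fin n)) :
    φ y ≤ φ x + ⟪φ' x, y - x⟫ + L / 2 * ‖y - x‖ ^ 2 := by
  set d := y - x with hd
  set ψ : ℝ → ℝ := fun t => φ (x + t • d) - t * ⟪φ' x, d⟫ - L * t ^ 2 * ‖d‖ ^ 2 / 2 with hψ
  have hder : ∀ t : ℝ, HasDerivAt ψ
      (⟪φ' (x + t • d), d⟫ - ⟪φ' x, d⟫ - L * t * ‖d‖ ^ 2) t := by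
    intro t
    have hc : HasDerivAt (fun t : ℝ => x + t • d) d t := by
      simpa using ((hasDerivAt_id t).smul_const d).const_add x
    have h1 : HasDerivAt (fun t : ℝ => φ (x + t • d)) ⟪φ' (x + t • d), d⟫ t := by
      have := ((hdiff (x + t • d)).hasFDerivAt).comp_hasDerivAt t hc
      simp [InnerProductSpace.toDual_apply_apply] at this
      exact this
    have h2 : HasDerivAt (fun t : ℝ => t * ⟪φ' x, d⟫) ⟪φ' x, d⟫ t := by
      simpa using (hasDerivAt_id t).mul_const ⟪φ' x, d⟫
    have h3 : HasDerivAt (fun t : ℝ => L * t ^ 2 * ‖d‖ ^ 2 / 2) (L * t * ‖d‖ ^ 2) t := by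
      have h4 := (((hasDerivAt_pow 2 t).const_mul L).mul_const (‖d‖ ^ 2)).div_const 2
      convert h4 using 1
      · rfl
      · rfl
      ring
    exact (h1.sub h2).sub h3
  have hmono : ψ 1 ≤ ψ 0 := by
    have hcont : ContinuousOn ψ (Set.Icc 0 1) :=
      fun t _ => ((hder t).continuousAt).continuousWithinAt
    have hdiffOn : DifferentiableOn ℝ ψ (interior (Set.Icc (0:ℝ) 1)) :=
      fun t _ => ((hder t).differentiableAt).differentiableWithinAt
    have hnonpos : ∀ t ∈ interior (Set.Icc (0:ℝ) 1), deriv ψ t ≤ 0 := by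
      intro t ht
      rw [interior_Icc] at ht
      rw [(hder t).deriv]
      have h5 : ⟪φ' (x + t • d), d⟫ - ⟪φ' x, d⟫ = ⟪φ' (x + t • d) - φ' x, d⟫ := by
        rw [inner_sub_left]
      rw [h5]
      have h6 : ⟪φ' (x + t • d) - φ' x, d⟫ ≤ ‖φ' (x + t • d) - φ' x‖ * ‖d‖ :=
        real_inner_le_norm _ _
      have h7 : ‖φ' (x + t • d) - φ' x‖ ≤ L * ‖x + t • d - x‖ := hlip _ _
      have h8 : ‖x + t • d - x‖ = t * ‖d‖ := by
        simp [norm_smul, abs_of_pos ht.1]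
      rw [h8] at h7
      have h9 : ‖φ' (x + t • d) - φ' x‖ * ‖d‖ ≤ L * (t * ‖d‖) * ‖d‖ :=
        mul_le_mul_of_nonneg_right h7 (norm_nonneg d)
      nlinarith [h9]
    exact antitoneOn_of_deriv_nonpos (convex_Icc 0 1) hcont hdiffOn hnonpos
      (Set.left_mem_Icc.2 zero_le_one) (Set.right_mem_Icc.2 zero_le_one) zero_le_one
  have hx : x + (1:ℝ) • d = y := by
    rw [one_smul, hd]; abel
  simp only [hψ, hx, one_mul, one_pow, mul_one] at hmono
  simp only [zero_smul, add_zero, zero_mul, ne_eq, mul_zero, zero_div, sub_zero,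
    zero_pow] at hmono
  linarith [hmono]

/-- Step 1 of Theorem 1 (AM-variant-I): combining the proximal-linearized `x`-update
(`c_k = γ L₁(y^k)`, `γ > 1`) with the exact `y`-minimization gives
`Ψ(z^k) - Ψ(z^{k+1}) ≥ ((γ-1) λ₁⁻ / 2) ‖x^{k+1} - x^k‖²`. -/
theorem stmt_7 {n₁ n₂ : ℕ}
    (f : EuclideanSpace ℝ (Fin n₁) → ℝ)
    (hfconv : ConvexOn ℝ Set.univ f) (hflsc : LowerSemicontinuous f)
    (hfbdd : BddBelow (Set.range f))
    (g : EuclideanSpace ℝ (Fin n₂) → ℝ)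
    (hgconv : ConvexOn ℝ Set.univ g) (hglsc : LowerSemicontinuous g)
    (hgbdd : BddBelow (Set.range g))
    (H : EuclideanSpace ℝ (Fin n₁) → EuclideanSpace ℝ (Fin n₂) → ℝ)
    (hHconv : ConvexOn ℝ Set.univ (fun p : EuclideanSpace ℝ (Fin n₁) × EuclideanSpace ℝ (Fin n₂) => H p.1 p.2))
    (Hx' : EuclideanSpace ℝ (Fin n₁) → EuclideanSpace ℝ (Fin n₂) → EuclideanSpace ℝ (Fin n₁))
    (yk : EuclideanSpace ℝ (Fin n₂))
    (hdiff : ∀ x, HasGradientAt (fun x => H x yk) (Hx' x yk) x)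
    (L₁ lam₁ : ℝ) (hlam : 0 < lam₁) (hlamL : lam₁ ≤ L₁)
    (hlip : ∀ x₁ x₂, ‖Hx' x₁ yk - Hx' x₂ yk‖ ≤ L₁ * ‖x₁ - x₂‖)
    (γ c : ℝ) (hγ : 1 < γ) (hc : c = γ * L₁)
    (xk xk1 : EuclideanSpace ℝ (Fin n₁)) (yk1 : EuclideanSpace ℝ (Fin n₂))
    (hprox : ∀ u, f xk1 + c / 2 * ‖xk1 - (xk - (1 / c) • Hx' xk yk)‖ ^ 2 ≤
      f u + c / 2 * ‖u - (xk - (1 / c) • Hx' xk yk)‖ ^ 2)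
    (hymin : ∀ y, H xk1 yk1 + g yk1 ≤ H xk1 y + g y) :
    (γ - 1) * lam₁ / 2 * ‖xk1 - xk‖ ^ 2 ≤
      (f xk + H xk yk + g yk) - (f xk1 + H xk1 yk1 + g yk1) := by
  have hL : 0 < L₁ := hlam.trans_le hlamL
  have hcpos : 0 < c := by rw [hc]; positivity
  set v := Hx' xk yk with hv
  set d := xk1 - xk with hd
  -- prox inequality at u = xk
  have hp := hprox xk
  have e1 : xk1 - (xk - (1 / c) • v) = d + (1 / c) • v := by
    rw [hd]; abel
  have e2 : xk - (xk - (1 / c) • v) = (1 / c) • v := by abel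
  rw [e1, e2] at hp
  have e3 : ‖d + (1 / c) • v‖ ^ 2 = ‖d‖ ^ 2 + 2 * ⟪d, (1 / c) • v⟫ + ‖(1 / c) • v‖ ^ 2 :=
    norm_add_sq_real d _
  have e4 : ⟪d, (1 / c) • v⟫ = (1 / c) * ⟪d, v⟫ := real_inner_smul_right d v (1 / c)
  -- so: f xk1 + c/2 ‖d‖² + ⟪d, v⟫ ≤ f xk
  have hc0 : c ≠ 0 := ne_of_gt hcpos
  have key1 : f xk1 + c / 2 * ‖d‖ ^ 2 + ⟪d, v⟫ ≤ f xk := by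
    rw [e3, e4] at hp
    have expand : c / 2 * (‖d‖ ^ 2 + 2 * (1 / c * ⟪d, v⟫) + ‖(1 / c) • v‖ ^ 2)
        = c / 2 * ‖d‖ ^ 2 + ⟪d, v⟫ + c / 2 * ‖(1 / c) • v‖ ^ 2 := by
      field_simp
    rw [expand] at hp
    linarith
  -- descent lemma
  have key2 : H xk1 yk ≤ H xk yk + ⟪v, d⟫ + L₁ / 2 * ‖d‖ ^ 2 :=
    descent_lemma (fun x => H x yk) (fun x => Hx' x yk) hdiff L₁ hlip xk xk1
  have hsym : ⟪v, d⟫ = ⟪d, v⟫ := (real_inner_comm v d).symm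
  have key3 := hymin yk
  have hnorm : (0:ℝ) ≤ ‖d‖ ^ 2 := by positivity
  have hfinal : (γ - 1) * lam₁ / 2 * ‖d‖ ^ 2 ≤ (γ - 1) * L₁ / 2 * ‖d‖ ^ 2 :=
    mul_le_mul_of_nonneg_right (by nlinarith) hnorm
  have hcL : c / 2 * ‖d‖ ^ 2 = L₁ / 2 * ‖d‖ ^ 2 + (γ - 1) * L₁ / 2 * ‖d‖ ^ 2 := by
    rw [hc]; ring
  linarith [key1, key2, key3, hsym, hfinal, hcL]
end

section
/- In the AAM method, if x^{k+1} minimizes x ↦ H(x, y^k) + f(x) + (c_k/2)‖x - x^k‖² and y^{k+1} minimizes y ↦ H(x^{k+1}, y) + g(y) + (d_k/2)‖y - y^k‖², then Ψ(z^k) - Ψ(z^{k+1}) ≥ (ρ₁/2)‖z^{k+1} - z^k‖², where ρ₁ = min{c_k, d_k} > 0, z^k = (x^k, y^k), and Ψ(x,y) = f(x) + H(x,y) + g(y). -/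
open RealInnerProductSpace

/-- Step 1 of Theorem 3 (AAM method): exact minimization of the two augmented subproblems gives
`Ψ(z^k) - Ψ(z^{k+1}) ≥ (ρ₁/2)‖z^{k+1} - z^k‖²` where `ρ₁ ≤ min{c_k, d_k}`. -/
theorem stmt_11 {n₁ n₂ : ℕ}
    (f : EuclideanSpace ℝ (Fin n₁) → ℝ) (hflsc : LowerSemicontinuous f)
    (g : EuclideanSpace ℝ (Fin n₂) → ℝ) (hglsc : LowerSemicontinuous g)
    (H : EuclideanSpace ℝ (Fin n₁) → EuclideanSpace ℝ (Fin n₂) → ℝ)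
    (c d ρ₁ : ℝ) (hcpos : 0 < c) (hdpos : 0 < d) (hρ₁pos : 0 < ρ₁)
    (hρ₁ : ρ₁ ≤ min c d)
    (xk xk1 : EuclideanSpace ℝ (Fin n₁)) (yk yk1 : EuclideanSpace ℝ (Fin n₂))
    (hxmin : ∀ x, H xk1 yk + f xk1 + c / 2 * ‖xk1 - xk‖ ^ 2 ≤
      H x yk + f x + c / 2 * ‖x - xk‖ ^ 2)
    (hymin : ∀ y, H xk1 yk1 + g yk1 + d / 2 * ‖yk1 - yk‖ ^ 2 ≤
      H xk1 y + g y + d / 2 * ‖y - yk‖ ^ 2) :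
    ρ₁ / 2 * (‖xk1 - xk‖ ^ 2 + ‖yk1 - yk‖ ^ 2) ≤
      (f xk + H xk yk + g yk) - (f xk1 + H xk1 yk1 + g yk1) := by
  have h1 := hxmin xk
  have h2 := hymin yk
  simp only [sub_self, norm_zero] at h1 h2
  have hc : ρ₁ ≤ c := hρ₁.trans (min_le_left _ _)
  have hd : ρ₁ ≤ d := hρ₁.trans (min_le_right _ _)
  have hx2 : (0:ℝ) ≤ ‖xk1 - xk‖ ^ 2 := sq_nonneg _
  have hy2 : (0:ℝ) ≤ ‖yk1 - yk‖ ^ 2 := sq_nonneg _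
  nlinarith [mul_le_mul_of_nonneg_right hc hx2, mul_le_mul_of_nonneg_right hd hy2]
end

section
/- Suppose Assumptions of Theorem 1 hold: f, g proper lsc convex bounded below, H continuously differentiable convex, ∇_x H(·,y) Lipschitz with constant L₁(y) where λ₁⁻ ≤ L₁(y^k) ≤ λ₁⁺ for all k, the AM-variant-I iterates satisfy x^{k+1} = prox_{c_k}^f(x^k - (1/c_k)∇_x H(x^k,y^k)) with c_k = γL₁(y^k), γ > 1, and y^{k+1} ∈ argmin_y{H(x^{k+1},y)+g(y)}, and ‖z^k - z*‖ ≤ R whenever Ψ(z^k) ≤ Ψ(z^0) for a minimizer z*. Then for all k ≥ 2: Ψ(z^k) - Ψ* ≤ max{ (1/2)^((k-1)/2)(Ψ(z^0) - Ψ*), 8(λ₁⁺)²R²γ²/(λ₁⁻(γ-1)(k-1)) }. -/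
open RealInnerProductSpace Filter Set Topology

section aux
variable {X : Type*} [NormedAddCommGroup X] [InnerProductSpace ℝ X] [CompleteSpace X]

lemma line_hasDerivAt (z w : X) (t₀ : ℝ) :
    HasDerivAt (fun t : ℝ => z + t • w) w t₀ := by
  simpa using ((hasDerivAt_id t₀).smul_const w).const_add z

lemma grad_line_hasDerivAt (H : X → ℝ) (G : X) {zt : X} (hG : HasGradientAt H G zt)
    (z w : X) (t₀ : ℝ) (hzt : zt = z + t₀ • w) :
    HasDerivAt (fun t : ℝ => H (z + t • w)) (⟪G, w⟫) t₀ := by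
  subst hzt
  have h := hG.hasFDerivAt.comp_hasDerivAt t₀ (line_hasDerivAt z w t₀)
  simpa [Function.comp_def] using h

lemma le_deriv_of_slope (φ : ℝ → ℝ) (D m : ℝ) (hd : HasDerivAt φ D 0)
    (h : ∀ t : ℝ, 0 < t → t ≤ 1 → m * t ≤ φ t - φ 0) : m ≤ D := by
  have ht : Tendsto (slope φ 0) (𝓝[>] (0:ℝ)) (𝓝 D) :=
    (hasDerivAt_iff_tendsto_slope.1 hd).mono_left
      (nhdsWithin_mono _ (fun x hx => ne_of_gt hx))
  refine ge_of_tendsto ht ?_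
  filter_upwards [Ioc_mem_nhdsGT_of_mem (⟨le_refl (0:ℝ), one_pos⟩ : (0:ℝ) ∈ Ico (0:ℝ) 1)]
    with t ht'
  have h0 := h t ht'.1 ht'.2
  rw [slope_def_field]
  rw [le_div_iff₀ (by simpa using ht'.1)]
  simpa using h0

lemma deriv_le_of_slope (φ : ℝ → ℝ) (D m : ℝ) (hd : HasDerivAt φ D 0)
    (h : ∀ t : ℝ, 0 < t → t ≤ 1 → φ t - φ 0 ≤ m * t) : D ≤ m := by
  have := le_deriv_of_slope (fun t => -φ t) (-D) (-m) hd.neg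
    (fun t ht0 ht1 => by have := h t ht0 ht1; simp only [neg_mul]; linarith)
  linarith

lemma convex_grad_ineq (H : X → ℝ) (hconv : ConvexOn ℝ Set.univ H)
    (G : X) {z : X} (hG : HasGradientAt H G z) (w : X) :
    ⟪G, w - z⟫ ≤ H w - H z := by
  have hd : HasDerivAt (fun t : ℝ => H (z + t • (w - z))) (⟪G, w - z⟫) 0 :=
    grad_line_hasDerivAt H G hG z (w - z) 0 (by simp)
  refine deriv_le_of_slope _ _ _ hd ?_
  intro t ht0 ht1
  have hcomb : z + t • (w - z) = (1 - t) • z + t • w := by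
    rw [smul_sub, sub_smul, one_smul]; abel
  have hcv := hconv.2 (mem_univ z) (mem_univ w) (by linarith : (0:ℝ) ≤ 1 - t)
    (le_of_lt ht0) (by ring)
  rw [← hcomb] at hcv
  simp only [smul_eq_mul, zero_smul, add_zero] at *
  nlinarith [hcv]

lemma descent_core (φ φd : ℝ → ℝ) (hd : ∀ t, HasDerivAt φ (φd t) t)
    (M : ℝ) (hM : 0 ≤ M) (hlip : ∀ s t : ℝ, |φd s - φd t| ≤ M * |s - t|) :
    φ 1 ≤ φ 0 + φd 0 + M / 2 := by
  have hcont : Continuous φd := by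
    have : LipschitzWith M.toNNReal φd := by
      apply LipschitzWith.of_dist_le_mul
      intro a b
      rw [Real.dist_eq, Real.dist_eq, Real.coe_toNNReal M hM]
      exact hlip a b
    exact this.continuous
  have hint : IntervalIntegrable φd MeasureTheory.volume 0 1 :=
    hcont.intervalIntegrable 0 1
  have heq : ∫ t in (0:ℝ)..1, φd t = φ 1 - φ 0 :=
    intervalIntegral.integral_eq_sub_of_hasDerivAt (fun t _ => hd t) hint
  have hint2 : IntervalIntegrable (fun t : ℝ => φd 0 + M * t) MeasureTheory.volume 0 1 :=
    (by fun_prop : Continuous fun t : ℝ => φd 0 + M * t).intervalIntegrable 0 1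
  have hb : ∫ t in (0:ℝ)..1, φd t ≤ ∫ t in (0:ℝ)..1, (φd 0 + M * t) := by
    apply intervalIntegral.integral_mono_on (by norm_num) hint hint2
    intro t ht
    have h1 := hlip t 0
    rw [sub_zero, abs_of_nonneg ht.1] at h1
    have h2 : φd t - φd 0 ≤ M * t := le_trans (le_abs_self _) h1
    linarith
  have hval : ∫ t in (0:ℝ)..1, (φd 0 + M * t) = φd 0 + M / 2 := by
    rw [intervalIntegral.integral_add (intervalIntegrable_const)
      ((by fun_prop : Continuous fun t : ℝ => M * t).intervalIntegrable 0 1)]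
    rw [intervalIntegral.integral_const_mul, integral_id, intervalIntegral.integral_const]
    norm_num
    ring
  rw [heq] at hb
  rw [hval] at hb
  linarith

lemma le_of_forall_Ioc (a b M : ℝ) (hM : 0 ≤ M)
    (h : ∀ t : ℝ, 0 < t → t ≤ 1 → a ≤ b + M * t) : a ≤ b := by
  by_contra hlt
  push_neg at hlt
  set t : ℝ := min 1 ((a - b) / (2 * (M + 1))) with htdef
  have hab : 0 < a - b := by linarith
  have ht0 : 0 < t := lt_min one_pos (by positivity)
  have ht1 : t ≤ 1 := min_le_left _ _
  have h2 : t ≤ (a - b) / (2 * (M + 1)) := min_le_right _ _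
  have h3 := h t ht0 ht1
  have h4 : M * t ≤ M * ((a - b) / (2 * (M + 1))) :=
    mul_le_mul_of_nonneg_left h2 hM
  have h5 : M * ((a - b) / (2 * (M + 1))) < (a - b) := by
    rw [mul_div_assoc']
    rw [div_lt_iff₀ (by positivity)]
    nlinarith
  linarith

end aux

lemma rec_lemma (A : ℕ → ℝ) (C : ℝ) (hC : 0 ≤ C)
    (hnn : ∀ k, 0 ≤ A k) (hmono : ∀ k, A (k + 1) ≤ A k)
    (hrec : ∀ k, 1 ≤ k → (A (k + 1)) ^ 2 ≤ C * (A k - A (k + 1))) :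
    ∀ k : ℕ, 2 ≤ k → A k ≤ max (((1:ℝ)/2) ^ (((k:ℝ) - 1)/2) * A 1) (4 * C / ((k:ℝ) - 1)) := by
  have inv : ∀ k : ℕ, 1 ≤ k → ∃ p q : ℕ, p + q + 1 = k ∧
      A k ≤ ((1:ℝ)/2) ^ p * A 1 ∧ (q : ℝ) * A k ≤ 2 * C := by
    intro k hk
    induction k, hk using Nat.le_induction with
    | base => exact ⟨0, 0, rfl, by norm_num, by norm_num; linarith⟩
    | succ k hk ih =>
      obtain ⟨p, q, hpq, h1, h2⟩ := ih
      by_cases hcase : A (k + 1) ≤ A k / 2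
      · refine ⟨p + 1, q, by omega, ?_, ?_⟩
        · have h3 : ((1:ℝ)/2) ^ (p + 1) * A 1 = (((1:ℝ)/2) ^ p * A 1) / 2 := by
            rw [pow_succ]; ring
          rw [h3]
          linarith
        · calc (q : ℝ) * A (k + 1) ≤ (q : ℝ) * A k :=
                mul_le_mul_of_nonneg_left (hmono k) (Nat.cast_nonneg q)
            _ ≤ 2 * C := h2
      · push_neg at hcase
        refine ⟨p, q + 1, by omega, le_trans (hmono k) h1, ?_⟩
        have hA1 : 0 < A (k + 1) := lt_of_le_of_lt (by linarith [hnn k] : (0:ℝ) ≤ A k / 2) hcase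
        have hAk : 0 < A k := lt_of_lt_of_le hA1 (hmono k)
        have hr := hrec k hk
        have hq : (0:ℝ) ≤ q := Nat.cast_nonneg q
        push_cast
        nlinarith [mul_le_mul_of_nonneg_right h2 (hnn (k+1)), mul_pos hAk hA1,
          mul_le_mul_of_nonneg_left (hmono k) hq]
  intro k hk
  obtain ⟨p, q, hpq, h1, h2⟩ := inv k (by omega)
  have hk1 : (0:ℝ) < (k:ℝ) - 1 := by
    have : (2:ℝ) ≤ (k:ℝ) := by exact_mod_cast hk
    linarith
  by_cases hp : ((k:ℝ) - 1) / 2 ≤ (p : ℝ)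
  · refine le_trans ?_ (le_max_left _ _)
    refine le_trans h1 ?_
    apply mul_le_mul_of_nonneg_right _ (hnn 1)
    rw [← Real.rpow_natCast ((1:ℝ)/2) p]
    exact Real.rpow_le_rpow_of_exponent_ge (by norm_num) (by norm_num) hp
  · refine le_trans ?_ (le_max_right _ _)
    push_neg at hp
    have hq2 : (k:ℝ) - 1 ≤ 2 * (q:ℝ) := by
      have hcast : (p:ℝ) + (q:ℝ) + 1 = (k:ℝ) := by exact_mod_cast hpq
      linarith
    rw [le_div_iff₀ hk1]
    calc A k * ((k:ℝ) - 1) ≤ A k * (2 * q) :=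
          mul_le_mul_of_nonneg_left hq2 (hnn k)
      _ = 2 * ((q:ℝ) * A k) := by ring
      _ ≤ 2 * (2 * C) := by linarith
      _ = 4 * C := by ring

section main
variable {E F : Type*} [NormedAddCommGroup E] [InnerProductSpace ℝ E] [CompleteSpace E]
  [NormedAddCommGroup F] [InnerProductSpace ℝ F] [CompleteSpace F]

set_option maxHeartbeats 1000000 in
lemma main_aux
    (f : E → ℝ) (hfconv : ConvexOn ℝ Set.univ f)
    (g : F → ℝ) (hgconv : ConvexOn ℝ Set.univ g)
    (H : WithLp 2 (E × F) → ℝ) (hHconv : ConvexOn ℝ Set.univ H)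
    (H' : WithLp 2 (E × F) → WithLp 2 (E × F))
    (hdiff : ∀ z, HasGradientAt H (H' z) z)
    (L₁ : F → ℝ)
    (hlip : ∀ (y : F) (x₁ x₂ : E),
      ‖(H' (WithLp.toLp 2 (x₁, y))).ofLp.1 - (H' (WithLp.toLp 2 (x₂, y))).ofLp.1‖ ≤ L₁ y * ‖x₁ - x₂‖)
    (x : ℕ → E) (y : ℕ → F) (z : ℕ → WithLp 2 (E × F))
    (hz : ∀ k, z k = WithLp.toLp 2 (x k, y k))
    (Ψ : WithLp 2 (E × F) → ℝ)
    (hΨ : ∀ w, Ψ w = f w.ofLp.1 + H w + g w.ofLp.2)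
    (lam₁m lam₁p : ℝ) (hlam₁m : 0 < lam₁m)
    (hbound : ∀ k, lam₁m ≤ L₁ (y k) ∧ L₁ (y k) ≤ lam₁p)
    (γ : ℝ) (hγ : 1 < γ) (c : ℕ → ℝ) (hc : ∀ k, c k = γ * L₁ (y k))
    (hproxx : ∀ k, ∀ u, f (x (k + 1)) +
        c k / 2 * ‖x (k + 1) - (x k - (1 / c k) • (H' (z k)).ofLp.1)‖ ^ 2 ≤
      f u + c k / 2 * ‖u - (x k - (1 / c k) • (H' (z k)).ofLp.1)‖ ^ 2)
    (hymin : ∀ k, ∀ v, H (WithLp.toLp 2 (x (k + 1), y (k + 1))) + g (y (k + 1)) ≤ H (WithLp.toLp 2 (x (k + 1), v)) + g v)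
    (zstar : WithLp 2 (E × F)) (hopt : ∀ w, Ψ zstar ≤ Ψ w)
    (R : ℝ) (hR : ∀ k, Ψ (z k) ≤ Ψ (z 0) → ‖z k - zstar‖ ≤ R) :
    ∀ k : ℕ, 2 ≤ k → Ψ (z k) - Ψ zstar ≤
      max (((1 : ℝ) / 2) ^ (((k : ℝ) - 1) / 2) * (Ψ (z 0) - Ψ zstar))
        (8 * lam₁p ^ 2 * R ^ 2 * γ ^ 2 / (lam₁m * (γ - 1) * ((k : ℝ) - 1))) := by
  have hγpos : (0:ℝ) < γ := by linarith
  have hγ0 : (0:ℝ) < γ - 1 := by linarith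
  have hLpos : ∀ k, 0 < L₁ (y k) := fun k => lt_of_lt_of_le hlam₁m (hbound k).1
  have hcpos : ∀ k, 0 < c k := fun k => by rw [hc k]; exact mul_pos hγpos (hLpos k)
  have hlamp : (0:ℝ) < lam₁p := lt_of_lt_of_le hlam₁m (le_trans (hbound 0).1 (hbound 0).2)
  -- Ψ along iterates
  have hΨz : ∀ k, Ψ (z k) = f (x k) + H (WithLp.toLp 2 (x k, y k)) + g (y k) := by
    intro k; rw [hΨ, hz k]
  -- the descent lemma
  have descent : ∀ k : ℕ, H (WithLp.toLp 2 (x (k+1), y k)) ≤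
      H (WithLp.toLp 2 (x k, y k))
      + ⟪(H' (WithLp.toLp 2 (x k, y k))).ofLp.1, x (k+1) - x k⟫
      + L₁ (y k) / 2 * ‖x (k+1) - x k‖^2 := by
    intro k
    set d := x (k+1) - x k with hd
    set X0 : WithLp 2 (E × F) := WithLp.toLp 2 (x k, y k) with hX0
    set w : WithLp 2 (E × F) := WithLp.toLp 2 (d, (0:F)) with hw
    have hline : ∀ t : ℝ, X0 + t • w = (WithLp.toLp 2 (x k + t • d, y k)) := by
      intro t
      show (WithLp.toLp 2 (x k + t • d, y k + t • (0:F))) = _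
      rw [smul_zero, add_zero]
    set φ : ℝ → ℝ := fun t => H (X0 + t • w) with hφ
    set φd : ℝ → ℝ :=
      fun t => ⟪(H' (WithLp.toLp 2 (x k + t • d, y k))).ofLp.1, d⟫ with hφd
    have hder : ∀ t : ℝ, HasDerivAt φ (φd t) t := by
      intro t
      have h0 := grad_line_hasDerivAt H (H' (X0 + t • w)) (hdiff _) X0 w t rfl
      rw [hline t] at h0
      have hv : ⟪H' (WithLp.toLp 2 (x k + t • d, y k)), w⟫ = φd t := by
        rw [WithLp.prod_inner_apply, hw]
        simp
        rfl
      rwa [hv] at h0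
    have hM : (0:ℝ) ≤ L₁ (y k) * ‖d‖^2 :=
      mul_nonneg (hLpos k).le (sq_nonneg _)
    have hlipφ : ∀ s t : ℝ, |φd s - φd t| ≤ (L₁ (y k) * ‖d‖^2) * |s - t| := by
      intro s t
      have e1 : φd s - φd t
          = ⟪(H' (WithLp.toLp 2 (x k + s • d, y k))).ofLp.1
            - (H' (WithLp.toLp 2 (x k + t • d, y k))).ofLp.1, d⟫ := by
        rw [inner_sub_left]
      rw [e1]
      have e2 : (x k + s • d) - (x k + t • d) = (s - t) • d := by
        rw [sub_smul]; abel
      calc |⟪(H' (WithLp.toLp 2 (x k + s • d, y k))).ofLp.1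
            - (H' (WithLp.toLp 2 (x k + t • d, y k))).ofLp.1, d⟫|
          ≤ ‖(H' (WithLp.toLp 2 (x k + s • d, y k))).ofLp.1
            - (H' (WithLp.toLp 2 (x k + t • d, y k))).ofLp.1‖ * ‖d‖ :=
            abs_real_inner_le_norm _ _
        _ ≤ (L₁ (y k) * ‖(x k + s • d) - (x k + t • d)‖) * ‖d‖ :=
            mul_le_mul_of_nonneg_right (hlip (y k) _ _) (norm_nonneg d)
        _ = (L₁ (y k) * ‖d‖^2) * |s - t| := by
            rw [e2, norm_smul, Real.norm_eq_abs]; ring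
    have hfin := descent_core φ φd hder _ hM hlipφ
    have e1 : φ 1 = H (WithLp.toLp 2 (x (k+1), y k)) := by
      show H (X0 + (1:ℝ) • w) = _
      rw [hline 1]
      have hx : x k + (1:ℝ) • d = x (k+1) := by rw [one_smul, hd]; abel
      rw [hx]
    have e0 : φ 0 = H (WithLp.toLp 2 (x k, y k)) := by
      show H (X0 + (0:ℝ) • w) = _
      rw [zero_smul, add_zero]
    have ed : φd 0 = ⟪(H' (WithLp.toLp 2 (x k, y k))).ofLp.1, d⟫ := by
      show ⟪(H' (WithLp.toLp 2 (x k + (0:ℝ) • d, y k))).ofLp.1, d⟫ = _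
      rw [zero_smul, add_zero]
    rw [e1, e0, ed] at hfin
    linarith
  -- prox inequality at u = x k
  have hstep : ∀ k : ℕ, f (x (k+1)) + c k / 2 * ‖x (k+1) - x k‖^2
      + ⟪(H' (z k)).ofLp.1, x (k+1) - x k⟫ ≤ f (x k) := by
    intro k
    have h := hproxx k (x k)
    have hcne : (c k) ≠ 0 := ne_of_gt (hcpos k)
    set G := (H' (z k)).ofLp.1 with hG
    set d := x (k+1) - x k with hd
    have e1 : x (k+1) - (x k - (1 / c k) • G) = d + (1 / c k) • G := by
      rw [hd]; abel
    have e2 : x k - (x k - (1 / c k) • G) = (1 / c k) • G := by abel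
    rw [e1, e2, norm_add_sq_real, real_inner_smul_right] at h
    have e3 : ‖(1 / c k) • G‖^2 = (1 / c k)^2 * ‖G‖^2 := by
      rw [norm_smul, Real.norm_eq_abs, mul_pow, sq_abs]
    rw [e3] at h
    have e4 : ⟪G, d⟫ = ⟪d, G⟫ := real_inner_comm _ _
    rw [e4]
    have expand : c k / 2 * (‖d‖^2 + 2 * ((1 / c k) * ⟪d, G⟫) + (1 / c k)^2 * ‖G‖^2)
        = c k / 2 * ‖d‖^2 + ⟪d, G⟫ + c k / 2 * ((1 / c k)^2 * ‖G‖^2) := by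
      field_simp
    rw [expand] at h
    linarith
  -- sufficient decrease
  have hdec : ∀ k : ℕ, Ψ (z (k+1)) + (γ - 1) * L₁ (y k) / 2 * ‖x (k+1) - x k‖^2
      ≤ Ψ (z k) := by
    intro k
    have h1 := descent k
    have h2 := hstep k
    rw [hz k] at h2
    have h3 := hymin k (y k)
    have hcoef : (γ - 1) * L₁ (y k) / 2 * ‖x (k+1) - x k‖^2
        = c k / 2 * ‖x (k+1) - x k‖^2 - L₁ (y k) / 2 * ‖x (k+1) - x k‖^2 := by
      rw [hc k]; ring
    have e4 : ⟪(H' (WithLp.toLp 2 (x k, y k))).ofLp.1, x (k+1) - x k⟫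
        = ⟪x (k+1) - x k, (H' (WithLp.toLp 2 (x k, y k))).ofLp.1⟫ := real_inner_comm _ _
    rw [e4] at h1
    linarith [hΨz k, hΨz (k+1)]
  have hmonoA : ∀ k : ℕ, Ψ (z (k+1)) ≤ Ψ (z k) := by
    intro k
    have hq : 0 ≤ (γ - 1) * L₁ (y k) / 2 * ‖x (k+1) - x k‖^2 := by
      have := mul_nonneg (mul_nonneg (by linarith : (0:ℝ) ≤ γ - 1) (hLpos k).le)
        (sq_nonneg ‖x (k+1) - x k‖)
      nlinarith
    linarith [hdec k]
  have hlevel : ∀ k : ℕ, Ψ (z k) ≤ Ψ (z 0) := by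
    intro k
    induction k with
    | zero => exact le_refl _
    | succ n ih => exact le_trans (hmonoA n) ih
  have hR0 : 0 ≤ R := le_trans (norm_nonneg _) (hR 0 (le_refl _))
  have hRx : ∀ k, ‖x k - zstar.ofLp.1‖ ≤ R := by
    intro k
    have h0 := hR k (hlevel k)
    have hsq := WithLp.prod_norm_sq_eq_of_L2 (z k - zstar)
    have hf1 : (z k - zstar).fst = x k - zstar.ofLp.1 := by rw [hz k]; rfl
    have hf2 : (z k - zstar).snd = y k - zstar.ofLp.2 := by rw [hz k]; rfl
    rw [hf1, hf2] at hsq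
    nlinarith [norm_nonneg (z k - zstar), norm_nonneg (x k - zstar.ofLp.1),
      sq_nonneg ‖y k - zstar.ofLp.2‖, mul_le_mul h0 h0 (norm_nonneg _) hR0]
  -- subgradient inequality for g at y (k+1)
  have gsub : ∀ k : ℕ, ∀ v : F, g (y (k+1)) - g v ≤
      ⟪(H' (WithLp.toLp 2 (x (k+1), y (k+1)))).ofLp.2, v - y (k+1)⟫ := by
    intro k v
    set Z1 : WithLp 2 (E × F) := WithLp.toLp 2 (x (k+1), y (k+1)) with hZ1
    set wv : WithLp 2 (E × F) := WithLp.toLp 2 ((0:E), v - y (k+1)) with hwv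
    have hline2 : ∀ t : ℝ, Z1 + t • wv
        = (WithLp.toLp 2 (x (k+1), y (k+1) + t • (v - y (k+1)))) := by
      intro t
      show (WithLp.toLp 2 (x (k+1) + t • (0:E), y (k+1) + t • (v - y (k+1)))) = _
      rw [smul_zero, add_zero]
    have hd0 : HasDerivAt (fun t : ℝ => H (Z1 + t • wv)) (⟪H' Z1, wv⟫) 0 :=
      grad_line_hasDerivAt H (H' Z1) (hdiff Z1) Z1 wv 0 (by simp)
    have hb : ∀ t : ℝ, 0 < t → t ≤ 1 →
        (g (y (k+1)) - g v) * t ≤ (fun t : ℝ => H (Z1 + t • wv)) t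
          - (fun t : ℝ => H (Z1 + t • wv)) 0 := by
      intro t ht0 ht1
      simp only []
      rw [hline2 t, hline2 0]
      simp only [zero_smul, add_zero]
      have hcomb : y (k+1) + t • (v - y (k+1)) = (1 - t) • y (k+1) + t • v := by
        rw [smul_sub, sub_smul, one_smul]; abel
      have hcv := hgconv.2 (Set.mem_univ (y (k+1))) (Set.mem_univ v)
        (by linarith : (0:ℝ) ≤ 1 - t) ht0.le (by ring)
      rw [← hcomb] at hcv
      simp only [smul_eq_mul] at hcv
      have hmin := hymin k (y (k+1) + t • (v - y (k+1)))
      nlinarith [hmin, hcv]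
    have key := le_deriv_of_slope _ _ _ hd0 hb
    have hco : ⟪H' Z1, wv⟫ = ⟪(H' Z1).ofLp.2, v - y (k+1)⟫ := by
      rw [WithLp.prod_inner_apply, hwv]
      simp
    rw [hco] at key
    exact key
  -- prox subgradient inequality at u = zstar.ofLp.1
  have fsub : ∀ k : ℕ, f (x (k+1)) ≤ f zstar.ofLp.1
      + c k * ⟪x (k+1) - x k, zstar.ofLp.1 - x (k+1)⟫
      + ⟪(H' (z k)).ofLp.1, zstar.ofLp.1 - x (k+1)⟫ := by
    intro k
    have hcne : (c k) ≠ 0 := ne_of_gt (hcpos k)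
    set s := zstar.ofLp.1 with hs
    set G := (H' (z k)).ofLp.1 with hG
    set p := x k - (1 / c k) • G with hp
    set xp := x (k+1) with hxp
    have hM : 0 ≤ c k / 2 * ‖s - xp‖^2 :=
      mul_nonneg (by linarith [hcpos k] : (0:ℝ) ≤ c k / 2) (sq_nonneg _)
    have key : ∀ t : ℝ, 0 < t → t ≤ 1 →
        f xp ≤ (f s + c k * ⟪xp - p, s - xp⟫) + (c k / 2 * ‖s - xp‖^2) * t := by
      intro t ht0 ht1
      have h := hproxx k (xp + t • (s - xp))
      have e1 : xp + t • (s - xp) - p = (xp - p) + t • (s - xp) := by abel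
      rw [e1, norm_add_sq_real, real_inner_smul_right] at h
      have e2 : ‖t • (s - xp)‖^2 = t^2 * ‖s - xp‖^2 := by
        rw [norm_smul, Real.norm_eq_abs, mul_pow, sq_abs]
      rw [e2] at h
      have hcomb : xp + t • (s - xp) = (1 - t) • xp + t • s := by
        rw [smul_sub, sub_smul, one_smul]; abel
      have hcv := hfconv.2 (Set.mem_univ xp) (Set.mem_univ s)
        (by linarith : (0:ℝ) ≤ 1 - t) ht0.le (by ring)
      rw [← hcomb] at hcv
      simp only [smul_eq_mul] at hcv
      have h2 : t * f xp ≤ t * ((f s + c k * ⟪xp - p, s - xp⟫)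
          + (c k / 2 * ‖s - xp‖^2) * t) := by nlinarith [h, hcv]
      exact le_of_mul_le_mul_left h2 ht0
    have hfin := le_of_forall_Ioc _ _ _ hM key
    have e5 : ⟪xp - p, s - xp⟫ = ⟪xp - x k, s - xp⟫ + (1 / c k) * ⟪G, s - xp⟫ := by
      have e : xp - p = (xp - x k) + (1 / c k) • G := by rw [hp]; abel
      rw [e, inner_add_left, real_inner_smul_left]
    have e6 : c k * ⟪xp - p, s - xp⟫
        = c k * ⟪xp - x k, s - xp⟫ + ⟪G, s - xp⟫ := by
      rw [e5, mul_add]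
      congr 1
      rw [← mul_assoc, mul_one_div_cancel hcne, one_mul]
    linarith [hfin, e6]
  -- the key per-step bound
  have keyineq : ∀ k : ℕ, 1 ≤ k →
      Ψ (z (k+1)) - Ψ zstar ≤ c k * (R * ‖x (k+1) - x k‖) := by
    intro k hk1
    obtain ⟨j, rfl⟩ : ∃ j, k = j + 1 := ⟨k - 1, by omega⟩
    have hA := fsub (j+1)
    rw [hz (j+1)] at hA
    have hB := convex_grad_ineq H hHconv (H' (z (j+1))) (hdiff (z (j+1))) zstar
    have hsubz : zstar - z (j+1)
        = (WithLp.toLp 2 (zstar.ofLp.1 - x (j+1), zstar.ofLp.2 - y (j+1))) := by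
      rw [hz (j+1)]; rfl
    rw [hsubz, WithLp.prod_inner_apply] at hB
    have hpf1 : (WithLp.toLp 2 (zstar.ofLp.1 - x (j+1), zstar.ofLp.2 - y (j+1))).ofLp.1
        = zstar.ofLp.1 - x (j+1) := rfl
    have hpf2 : (WithLp.toLp 2 (zstar.ofLp.1 - x (j+1), zstar.ofLp.2 - y (j+1))).ofLp.2
        = zstar.ofLp.2 - y (j+1) := rfl
    rw [hpf1, hpf2, hz (j+1)] at hB
    have hC := descent (j+1)
    have hGs := gsub j zstar.ofLp.2
    have hY := hymin (j+1) (y (j+1))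
    have I1 : ⟪(H' (WithLp.toLp 2 (x (j+1), y (j+1)))).ofLp.1, zstar.ofLp.1 - x (j+1+1)⟫
        + ⟪(H' (WithLp.toLp 2 (x (j+1), y (j+1)))).ofLp.1, x (j+1+1) - x (j+1)⟫
        = ⟪(H' (WithLp.toLp 2 (x (j+1), y (j+1)))).ofLp.1, zstar.ofLp.1 - x (j+1)⟫ := by
      rw [← inner_add_right]
      congr 1
      abel
    have I2 : ⟪x (j+1+1) - x (j+1), zstar.ofLp.1 - x (j+1+1)⟫
        ≤ R * ‖x (j+1+1) - x (j+1)‖ - ‖x (j+1+1) - x (j+1)‖^2 := by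
      have e : zstar.ofLp.1 - x (j+1+1) = (zstar.ofLp.1 - x (j+1)) - (x (j+1+1) - x (j+1)) := by
        abel
      rw [e, inner_sub_right, real_inner_self_eq_norm_sq]
      have cs := real_inner_le_norm (x (j+1+1) - x (j+1)) (zstar.ofLp.1 - x (j+1))
      have hr : ‖zstar.ofLp.1 - x (j+1)‖ ≤ R := by
        rw [norm_sub_rev]; exact hRx (j+1)
      nlinarith [norm_nonneg (x (j+1+1) - x (j+1))]
    have I3 : c (j+1) * ⟪x (j+1+1) - x (j+1), zstar.ofLp.1 - x (j+1+1)⟫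
        ≤ c (j+1) * (R * ‖x (j+1+1) - x (j+1)‖ - ‖x (j+1+1) - x (j+1)‖^2) :=
      mul_le_mul_of_nonneg_left I2 (hcpos (j+1)).le
    have I4 : L₁ (y (j+1)) / 2 * ‖x (j+1+1) - x (j+1)‖^2
        ≤ c (j+1) * ‖x (j+1+1) - x (j+1)‖^2 := by
      rw [hc (j+1)]
      nlinarith [mul_nonneg (mul_nonneg (hLpos (j+1)).le (sq_nonneg ‖x (j+1+1) - x (j+1)‖))
        (by linarith : (0:ℝ) ≤ γ - 1/2)]
    linarith [hA, hB, hC, hGs, hY, I1, I3, I4, hΨz (j+1+1), hΨ zstar]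
  -- recursion
  have hAnn : ∀ k : ℕ, 0 ≤ Ψ (z k) - Ψ zstar := fun k => sub_nonneg.2 (hopt (z k))
  have hmonoA' : ∀ k : ℕ, Ψ (z (k+1)) - Ψ zstar ≤ Ψ (z k) - Ψ zstar :=
    fun k => sub_le_sub_right (hmonoA k) _
  set Cγ := 2 * γ^2 * lam₁p^2 * R^2 / ((γ - 1) * lam₁m) with hCγ
  have hCγ0 : 0 ≤ Cγ := by
    rw [hCγ]
    apply div_nonneg
    · positivity
    · positivity
  have hrecA : ∀ k : ℕ, 1 ≤ k → (Ψ (z (k+1)) - Ψ zstar)^2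
      ≤ Cγ * ((Ψ (z k) - Ψ zstar) - (Ψ (z (k+1)) - Ψ zstar)) := by
    intro k hk
    have h1 := keyineq k hk
    have h2 := hdec k
    have hcb : c k ≤ γ * lam₁p := by
      rw [hc k]
      exact mul_le_mul_of_nonneg_left (hbound k).2 hγpos.le
    have hRd : 0 ≤ R * ‖x (k+1) - x k‖ := mul_nonneg hR0 (norm_nonneg _)
    have h3 : Ψ (z (k+1)) - Ψ zstar ≤ γ * lam₁p * (R * ‖x (k+1) - x k‖) :=
      le_trans h1 (mul_le_mul_of_nonneg_right hcb hRd)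
    have h4 : (Ψ (z (k+1)) - Ψ zstar)^2 ≤ (γ * lam₁p * (R * ‖x (k+1) - x k‖))^2 :=
      pow_le_pow_left₀ (hAnn (k+1)) h3 2
    have h5 : (γ * lam₁p * (R * ‖x (k+1) - x k‖))^2
        = Cγ * ((γ - 1) * lam₁m / 2 * ‖x (k+1) - x k‖^2) := by
      rw [hCγ]
      field_simp
    have h6 : (γ - 1) * lam₁m / 2 * ‖x (k+1) - x k‖^2
        ≤ (γ - 1) * L₁ (y k) / 2 * ‖x (k+1) - x k‖^2 := by
      have hb1 := (hbound k).1
      nlinarith [mul_nonneg (mul_nonneg hγ0.le (sub_nonneg.2 hb1))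
        (sq_nonneg ‖x (k+1) - x k‖)]
    have h7 : (γ - 1) * L₁ (y k) / 2 * ‖x (k+1) - x k‖^2
        ≤ (Ψ (z k) - Ψ zstar) - (Ψ (z (k+1)) - Ψ zstar) := by linarith
    calc (Ψ (z (k+1)) - Ψ zstar)^2
        ≤ Cγ * ((γ - 1) * lam₁m / 2 * ‖x (k+1) - x k‖^2) := by rw [← h5]; exact h4
      _ ≤ Cγ * ((Ψ (z k) - Ψ zstar) - (Ψ (z (k+1)) - Ψ zstar)) :=
          mul_le_mul_of_nonneg_left (le_trans h6 h7) hCγ0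
  intro k hk
  have hfinal := rec_lemma (fun k => Ψ (z k) - Ψ zstar) Cγ hCγ0 hAnn hmonoA' hrecA k hk
  refine le_trans hfinal (max_le_max ?_ ?_)
  · exact mul_le_mul_of_nonneg_left (hmonoA' 0) (Real.rpow_nonneg (by norm_num) _)
  · apply le_of_eq
    have hk1 : ((k:ℝ) - 1) ≠ 0 := by
      have h2k : (2:ℝ) ≤ (k:ℝ) := by exact_mod_cast hk
      intro hcon
      rw [sub_eq_zero] at hcon
      rw [hcon] at h2k
      norm_num at h2k
    rw [hCγ]
    field_simp
    ring
end main

/-- Theorem 1: sublinear rate of convergence of AM-variant-I. -/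
theorem stmt_12 {n₁ n₂ : ℕ}
    (f : EuclideanSpace ℝ (Fin n₁) → ℝ)
    (hfconv : ConvexOn ℝ Set.univ f) (hflsc : LowerSemicontinuous f)
    (hfbdd : BddBelow (Set.range f))
    (g : EuclideanSpace ℝ (Fin n₂) → ℝ)
    (hgconv : ConvexOn ℝ Set.univ g) (hglsc : LowerSemicontinuous g)
    (hgbdd : BddBelow (Set.range g))
    (H : WithLp 2 (EuclideanSpace ℝ (Fin n₁) × EuclideanSpace ℝ (Fin n₂)) → ℝ)
    (hHconv : ConvexOn ℝ Set.univ H)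
    (H' : WithLp 2 (EuclideanSpace ℝ (Fin n₁) × EuclideanSpace ℝ (Fin n₂)) →
      WithLp 2 (EuclideanSpace ℝ (Fin n₁) × EuclideanSpace ℝ (Fin n₂)))
    (hdiff : ∀ z, HasGradientAt H (H' z) z)
    -- Lipschitz continuity of the partial gradient `∇ₓH(·, y)` with constant `L₁ y`
    (L₁ : EuclideanSpace ℝ (Fin n₂) → ℝ)
    (hlip : ∀ (y : EuclideanSpace ℝ (Fin n₂)) (x₁ x₂ : EuclideanSpace ℝ (Fin n₁)),
      ‖(H' (WithLp.toLp 2 (x₁, y))).ofLp.1 - (H' (WithLp.toLp 2 (x₂, y))).ofLp.1‖ ≤ L₁ y * ‖x₁ - x₂‖)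
    -- the iterates and the objective
    (x : ℕ → EuclideanSpace ℝ (Fin n₁)) (y : ℕ → EuclideanSpace ℝ (Fin n₂))
    (z : ℕ → WithLp 2 (EuclideanSpace ℝ (Fin n₁) × EuclideanSpace ℝ (Fin n₂)))
    (hz : ∀ k, z k = WithLp.toLp 2 (x k, y k))
    (Ψ : WithLp 2 (EuclideanSpace ℝ (Fin n₁) × EuclideanSpace ℝ (Fin n₂)) → ℝ)
    (hΨ : ∀ w, Ψ w = f w.ofLp.1 + H w + g w.ofLp.2)
    (lam₁m lam₁p : ℝ) (hlam₁m : 0 < lam₁m)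
    (hbound : ∀ k, lam₁m ≤ L₁ (y k) ∧ L₁ (y k) ≤ lam₁p)
    (γ : ℝ) (hγ : 1 < γ) (c : ℕ → ℝ) (hc : ∀ k, c k = γ * L₁ (y k))
    (hproxx : ∀ k, ∀ u, f (x (k + 1)) +
        c k / 2 * ‖x (k + 1) - (x k - (1 / c k) • (H' (z k)).ofLp.1)‖ ^ 2 ≤
      f u + c k / 2 * ‖u - (x k - (1 / c k) • (H' (z k)).ofLp.1)‖ ^ 2)
    (hymin : ∀ k, ∀ v, H (WithLp.toLp 2 (x (k + 1), y (k + 1))) + g (y (k + 1)) ≤ H (WithLp.toLp 2 (x (k + 1), v)) + g v)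
    -- the optimal point and level-set radius
    (zstar : WithLp 2 (EuclideanSpace ℝ (Fin n₁) × EuclideanSpace ℝ (Fin n₂)))
    (hopt : ∀ w, Ψ zstar ≤ Ψ w)
    (R : ℝ) (hR : ∀ k, Ψ (z k) ≤ Ψ (z 0) → ‖z k - zstar‖ ≤ R) :
    ∀ k : ℕ, 2 ≤ k → Ψ (z k) - Ψ zstar ≤
      max (((1 : ℝ) / 2) ^ (((k : ℝ) - 1) / 2) * (Ψ (z 0) - Ψ zstar))
        (8 * lam₁p ^ 2 * R ^ 2 * γ ^ 2 / (lam₁m * (γ - 1) * ((k : ℝ) - 1))) := by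
  exact main_aux f hfconv g hgconv H hHconv H' hdiff L₁ hlip x y z hz Ψ hΨ
    lam₁m lam₁p hlam₁m hbound γ hγ c hc hproxx hymin zstar hopt R hR
end

section
/- If H is convex and continuously differentiable with ∇H Lipschitz of constant L₅, and x^{k+1}, y^{k+1} satisfy the first-order prox inequalities f(x^k) ≥ f(x^{k+1}) + (c_k/2)‖x^{k+1}-x^k‖² + ⟨x^{k+1}-x^k, ∇_x H(z^k)⟩ and g(y^k) ≥ g(y^{k+1}) + (d_k/2)‖y^{k+1}-y^k‖² + ⟨y^{k+1}-y^k, ∇_y H(z^k)⟩, then Ψ(z^k) - Ψ(z^{k+1}) ≥ (c_k/2)‖x^{k+1}-x^k‖² + (d_k/2)‖y^{k+1}-y^k‖² - L₅‖z^{k+1}-z^k‖². -/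
open RealInnerProductSpace

lemma grad_support {E : Type*} [NormedAddCommGroup E] [InnerProductSpace ℝ E] [CompleteSpace E]
    {H : E → ℝ} (hconv : ConvexOn ℝ Set.univ H) {w : E} {Hw : E}
    (hw : HasGradientAt H Hw w) (z : E) :
    H w + ⟪Hw, z - w⟫ ≤ H z := by
  set φ : ℝ → ℝ := fun t => H (w + t • (z - w)) with hφ
  have hcurve : ∀ t : ℝ, HasDerivAt (fun t : ℝ => w + t • (z - w)) (z - w) t := by
    intro t
    simpa using ((hasDerivAt_id t).smul_const (z - w)).const_add w
  have hderiv : HasDerivAt φ ⟪Hw, z - w⟫ 0 := by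
    have h1 : HasFDerivAt H ((InnerProductSpace.toDual ℝ E) Hw) ((0:ℝ) • (z - w) + w) := by
      simpa using hw.hasFDerivAt
    have h2 : HasDerivAt (fun t : ℝ => t • (z - w) + w) (z - w) 0 := by
      simpa using ((hasDerivAt_id (0:ℝ)).smul_const (z - w)).add_const w
    have := h1.comp_hasDerivAt 0 h2
    have heq : (H ∘ fun t : ℝ => t • (z - w) + w) = φ := by
      funext t; simp [φ, Function.comp, add_comm]
    rw [heq] at this
    exact this
  have hφconv : ConvexOn ℝ Set.univ φ := by
    have : ConvexOn ℝ Set.univ (fun t : ℝ => H ((AffineMap.lineMap w z) t)) := by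
      have := hconv.comp_affineMap (AffineMap.lineMap w z)
      exact this
    have heq : φ = fun t : ℝ => H ((AffineMap.lineMap w z) t) := by
      funext t
      simp only [φ, AffineMap.lineMap_apply, vadd_eq_add, vsub_eq_sub]
      rw [add_comm]
    rw [heq]
    exact this
  have := hφconv.le_slope_of_hasDerivAt (Set.mem_univ (0:ℝ)) (Set.mem_univ (1:ℝ))
    one_pos hderiv
  have h01 : φ 1 = H z := by simp [φ]
  have h00 : φ 0 = H w := by simp [φ]
  rw [slope_def_field] at this
  simp [h01, h00] at this
  linarith

/-- Inequalities (36)–(41) of Theorem 2: combining the two first-order prox inequalities with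
convexity of `H` and the `L₅`-Lipschitz continuity of `∇H` gives
`Ψ(z^k) - Ψ(z^{k+1}) ≥ (c_k/2)‖x^{k+1}-x^k‖² + (d_k/2)‖y^{k+1}-y^k‖² - L₅‖z^{k+1}-z^k‖²`. -/
theorem stmt_19 {n₁ n₂ : ℕ}
    (f : EuclideanSpace ℝ (Fin n₁) → ℝ)
    (g : EuclideanSpace ℝ (Fin n₂) → ℝ)
    (H : WithLp 2 (EuclideanSpace ℝ (Fin n₁) × EuclideanSpace ℝ (Fin n₂)) → ℝ)
    (hHconv : ConvexOn ℝ Set.univ H)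
    (H' : WithLp 2 (EuclideanSpace ℝ (Fin n₁) × EuclideanSpace ℝ (Fin n₂)) →
      WithLp 2 (EuclideanSpace ℝ (Fin n₁) × EuclideanSpace ℝ (Fin n₂)))
    (hdiff : ∀ z, HasGradientAt H (H' z) z)
    (L₅ : ℝ) (hL₅lip : ∀ z w, ‖H' z - H' w‖ ≤ L₅ * ‖z - w‖)
    (c d : ℝ)
    (xk xk1 : EuclideanSpace ℝ (Fin n₁)) (yk yk1 : EuclideanSpace ℝ (Fin n₂))
    (zk zk1 : WithLp 2 (EuclideanSpace ℝ (Fin n₁) × EuclideanSpace ℝ (Fin n₂)))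
    (hzk : zk = WithLp.toLp 2 (xk, yk)) (hzk1 : zk1 = WithLp.toLp 2 (xk1, yk1))
    (hineqx : f xk1 + c / 2 * ‖xk1 - xk‖ ^ 2 + ⟪xk1 - xk, (H' zk).ofLp.1⟫ ≤ f xk)
    (hineqy : g yk1 + d / 2 * ‖yk1 - yk‖ ^ 2 + ⟪yk1 - yk, (H' zk).ofLp.2⟫ ≤ g yk) :
    c / 2 * ‖xk1 - xk‖ ^ 2 + d / 2 * ‖yk1 - yk‖ ^ 2 - L₅ * ‖zk1 - zk‖ ^ 2 ≤
      (f xk + H zk + g yk) - (f xk1 + H zk1 + g yk1) := by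
  have hsup := grad_support hHconv (hdiff zk1) zk
  -- split the inner product on the product space
  have hsplit : ⟪zk1 - zk, H' zk⟫ = ⟪xk1 - xk, (H' zk).ofLp.1⟫ + ⟪yk1 - yk, (H' zk).ofLp.2⟫ := by
    rw [WithLp.prod_inner_apply, hzk, hzk1]
    rfl
  -- rewrite the convexity inner term
  have hsym : ⟪H' zk1, zk - zk1⟫ = -⟪zk1 - zk, H' zk1⟫ := by
    rw [real_inner_comm, ← inner_neg_left, neg_sub]
  have hsub : ⟪zk1 - zk, H' zk⟫ - ⟪zk1 - zk, H' zk1⟫ = ⟪zk1 - zk, H' zk - H' zk1⟫ := by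
    rw [inner_sub_right]
  have hlip : ⟪zk1 - zk, H' zk - H' zk1⟫ ≥ -(L₅ * ‖zk1 - zk‖ ^ 2) := by
    have h1 : ⟪zk1 - zk, H' zk1 - H' zk⟫ ≤ ‖zk1 - zk‖ * ‖H' zk1 - H' zk‖ :=
      real_inner_le_norm _ _
    have h2 : ‖zk1 - zk‖ * ‖H' zk1 - H' zk‖ ≤ ‖zk1 - zk‖ * (L₅ * ‖zk1 - zk‖) :=
      mul_le_mul_of_nonneg_left (hL₅lip zk1 zk) (norm_nonneg _)
    have h3 : ⟪zk1 - zk, H' zk1 - H' zk⟫ = -⟪zk1 - zk, H' zk - H' zk1⟫ := by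
      rw [← inner_neg_right, neg_sub]
    nlinarith [h1, h2, h3]
  linarith [hineqx, hineqy, hsup, hsplit, hsym, hsub, hlip]
end
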